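/- Let d, e, z, χ be integers with 1 ≤ e < d, z ≥ 0, and 2χ < d. Set χ′ = χ − d(d−3)/2 and define the rational number α by (χ′ + α)/d = (χ′ − z − 1 + g(d−e))/e. Then α = (e−d)·(d/2 − χ/e) − (d/e)·z, and α < 0. -/

import Mathlib

open Finset

/-- A spectrum of type `(d, χ)`: a nonincreasing `d`-tuple of integers with
entry sum `χ - d`. -/
def IsSpectrum (d : ℕ) (χ : ℤ) (a : Fin d → ℤ) : Prop :=
  Antitone a ∧ ∑ i, a i = χ - (d : ℤ)

/-- Balanced: consecutive entries drop by at most 1. -/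
def IsBalanced {d : ℕ} (a : Fin d → ℤ) : Prop :=
  ∀ (i : Fin d) (h : (i : ℕ) + 1 < d), a i - a ⟨(i : ℕ) + 1, h⟩ ≤ 1

/-- `h⁰` of a spectrum: `Σ_{a_i ≥ 0} (a_i + 1)`. -/
def h0 {d : ℕ} (a : Fin d → ℤ) : ℤ :=
  ∑ i, if 0 ≤ a i then a i + 1 else 0

/-- Arithmetic genus of a degree `d` plane curve: `(d-1)(d-2)/2`. -/
def gd (d : ℤ) : ℤ := (d - 1) * (d - 2) / 2

/-- the wall parameter computation in Proposition 4.7. -/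
theorem stmt_15 (d e z χ : ℤ) (he1 : 1 ≤ e) (hed : e < d) (hz : 0 ≤ z)
    (hχ : 2 * χ < d) (α : ℚ)
    (hα : (((χ : ℚ) - (d : ℚ) * ((d : ℚ) - 3) / 2) + α) / (d : ℚ) =
      (((χ : ℚ) - (d : ℚ) * ((d : ℚ) - 3) / 2) - (z : ℚ) - 1 +
        ((d : ℚ) - (e : ℚ) - 1) * ((d : ℚ) - (e : ℚ) - 2) / 2) / (e : ℚ)) :
    α = ((e : ℚ) - (d : ℚ)) * ((d : ℚ) / 2 - (χ : ℚ) / (e : ℚ)) -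
      ((d : ℚ) / (e : ℚ)) * (z : ℚ) ∧ α < 0 := by
  have he : (0:ℚ) < (e:ℚ) := by exact_mod_cast lt_of_lt_of_le one_pos he1
  have hd : (0:ℚ) < (d:ℚ) := by exact_mod_cast lt_trans (lt_of_lt_of_le one_pos he1) hed
  have hed' : (e:ℚ) < (d:ℚ) := by exact_mod_cast hed
  have hz' : (0:ℚ) ≤ (z:ℚ) := by exact_mod_cast hz
  have hχ' : 2*(χ:ℚ) < (d:ℚ) := by exact_mod_cast hχ
  have ha : α = ((e : ℚ) - (d : ℚ)) * ((d : ℚ) / 2 - (χ : ℚ) / (e : ℚ)) -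
      ((d : ℚ) / (e : ℚ)) * (z : ℚ) := by
    field_simp at hα ⊢
    linear_combination hα
  refine ⟨ha, ?_⟩
  rw [ha]
  have hpos : 0 < (d:ℚ)/2 - (χ:ℚ)/(e:ℚ) := by
    rw [sub_pos, div_lt_div_iff₀ he (by norm_num : (0:ℚ) < 2)]
    nlinarith [mul_nonneg (by exact_mod_cast sub_nonneg.2 (show (1:ℤ) ≤ e from he1) : (0:ℚ) ≤ (e:ℚ)-1) hd.le]
  have h1 : ((e:ℚ) - d) * ((d:ℚ)/2 - χ/e) < 0 :=
    mul_neg_of_neg_of_pos (by linarith) hpos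
  have h2 : 0 ≤ ((d:ℚ)/e) * z := mul_nonneg (by positivity) hz'
  linarith
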